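/- arXiv:1101.1781 — 4 statements merged into one kernel-verified Lean document; each statement's English description precedes it below -/
import Mathlib

section
/- Let n ≥ 2 and let a_1 ≥ a_2 ≥ ... ≥ a_n ≥ 1 be integers with a_1 ≤ n - 1. Set t = a_2 + a_3 + ... + a_n and let I = (x_1^{a_1}, ..., x_n^{a_n}) in S = k[x_1,...,x_n]. Then the ideal I_{≥t} generated by all monomials of I of degree ≥ t equals (x_1,...,x_n)^t, the t-th power of the maximal graded ideal. -/
open MvPolynomial

noncomputable section

namespace Stmt0Aux

variable {K : Type*} [Field K] {n : ℕ}

def deg {n : ℕ} (v : Fin n →₀ ℕ) : ℕ := v.sum fun _ e => e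

lemma deg_eq_sum (v : Fin n →₀ ℕ) : deg v = ∑ i, v i :=
  Finsupp.sum_fintype _ _ (fun _ => rfl)

lemma deg_sub_single {v : Fin n →₀ ℕ} {i : Fin n} (h : v i ≠ 0) :
    deg (v - Finsupp.single i 1) + 1 = deg v := by
  rw [deg_eq_sum, deg_eq_sum,
    ← Finset.sum_erase_add _ _ (Finset.mem_univ i),
    ← Finset.sum_erase_add _ (⇑v) (Finset.mem_univ i)]
  have h1 : ∀ j ∈ Finset.univ.erase i,
      (v - Finsupp.single i 1 : Fin n →₀ ℕ) j = v j := by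
    intro j hj
    rw [Finsupp.tsub_apply, Finsupp.single_eq_of_ne' (Finset.mem_erase.mp hj).1.symm]
    rfl
  rw [Finset.sum_congr rfl h1, Finsupp.tsub_apply, Finsupp.single_eq_same]
  have he : ∑ x ∈ Finset.univ.erase i, v x = (Finset.univ.erase i).sum ⇑v := rfl
  omega

lemma deg_add (u v : Fin n →₀ ℕ) : deg (u + v) = deg u + deg v := by
  simp [deg_eq_sum, Finset.sum_add_distrib]

lemma deg_single (i : Fin n) (e : ℕ) : deg (Finsupp.single i e) = e := by
  simp [deg, Finsupp.sum_single_index]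

lemma exists_ne_zero_of_deg_pos {v : Fin n →₀ ℕ} (h : 0 < deg v) : ∃ i, v i ≠ 0 := by
  by_contra hc
  push_neg at hc
  rw [deg_eq_sum] at h
  simp [hc] at h

lemma mono_mem_span_iff (s : Set (Fin n →₀ ℕ)) (v : Fin n →₀ ℕ) :
    monomial v (1 : K) ∈ Ideal.span ((fun s => monomial s (1 : K)) '' s) ↔ ∃ w ∈ s, w ≤ v := by
  rw [mem_ideal_span_monomial_image]
  simp [support_monomial]

lemma mono_mem_pow {t : ℕ} {v : Fin n →₀ ℕ} (h : t ≤ deg v) :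
    monomial v (1 : K) ∈ (Ideal.span (Set.range (X : Fin n → MvPolynomial (Fin n) K))) ^ t := by
  induction t generalizing v with
  | zero => simp [Ideal.one_eq_top]
  | succ t ih =>
    obtain ⟨i, hi⟩ := exists_ne_zero_of_deg_pos (lt_of_lt_of_le (Nat.succ_pos t) h)
    have hle : Finsupp.single i 1 ≤ v := Finsupp.single_le_iff.mpr (by omega)
    have key : monomial v (1 : K) = monomial (v - Finsupp.single i 1) (1 : K) * X i := by
      rw [X, monomial_mul, mul_one, tsub_add_cancel_of_le hle]
    rw [key, pow_succ]
    exact Ideal.mul_mem_mul (ih (by have := deg_sub_single hi; omega))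
      (Ideal.subset_span ⟨i, rfl⟩)

lemma pow_span_X (t : ℕ) :
    (Ideal.span (Set.range (X : Fin n → MvPolynomial (Fin n) K))) ^ t
      = Ideal.span ((fun s => monomial s (1 : K)) '' {v | deg v = t}) := by
  induction t with
  | zero =>
    rw [pow_zero, Ideal.one_eq_top, eq_comm, Ideal.eq_top_iff_one]
    exact Ideal.subset_span ⟨0, by simp [deg], by simp⟩
  | succ t ih =>
    have hX : Set.range (X : Fin n → MvPolynomial (Fin n) K)
        = (fun s => monomial s (1 : K)) '' Set.range (fun i => Finsupp.single i 1) := by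
      rw [← Set.range_comp]
      rfl
    rw [pow_succ, ih, hX, Ideal.span_mul_span]
    apply le_antisymm
    · rw [Ideal.span_le]
      intro x hx
      rw [Set.mem_mul] at hx
      obtain ⟨p, hp, q, hq, rfl⟩ := hx
      obtain ⟨w, hw, rfl⟩ := hp
      obtain ⟨i', ⟨i, rfl⟩, rfl⟩ := hq
      rw [monomial_mul, mul_one]
      exact Ideal.subset_span ⟨w + Finsupp.single i 1, by simp only [Set.mem_setOf_eq] at hw ⊢; simp [deg_add, deg_single, hw], rfl⟩
    · rw [Ideal.span_le]
      rintro x ⟨v, hv, rfl⟩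
      obtain ⟨i, hi⟩ := exists_ne_zero_of_deg_pos (by rw [hv]; exact Nat.succ_pos t)
      have hle : Finsupp.single i 1 ≤ v := Finsupp.single_le_iff.mpr (by omega)
      apply Ideal.subset_span
      have hdeg : (v - Finsupp.single i 1 : Fin n →₀ ℕ) ∈ {v : Fin n →₀ ℕ | deg v = t} := by
        have := deg_sub_single hi
        simp only [Set.mem_setOf_eq] at hv ⊢
        omega
      have h1 : monomial (v - Finsupp.single i 1) (1 : K) ∈
          (fun s => monomial s (1 : K)) '' {v : Fin n →₀ ℕ | deg v = t} := ⟨_, hdeg, rfl⟩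
      have h2 : monomial (Finsupp.single i 1) (1 : K) ∈
          (fun s => monomial s (1 : K)) '' Set.range (fun i => Finsupp.single i 1) :=
        ⟨_, ⟨i, rfl⟩, rfl⟩
      refine ⟨_, h1, _, h2, ?_⟩
      beta_reduce
      rw [monomial_mul, mul_one, tsub_add_cancel_of_le hle]

end Stmt0Aux

/-- The ideal generated by all monomials of `I` of total degree at least `t`. -/
def trunc {K : Type*} [Field K] {n : ℕ} (I : Ideal (MvPolynomial (Fin n) K)) (t : ℕ) :
    Ideal (MvPolynomial (Fin n) K) :=
  Ideal.span { p | ∃ v : Fin n →₀ ℕ, p = monomial v (1 : K) ∧ p ∈ I ∧ t ≤ v.sum fun _ e => e }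

/-- A monomial ideal `J` is stable if for every monomial `x^v ∈ J` and every `j < m(v)`,
where `m(v)` is the largest index of a variable dividing `x^v`, the monomial
`x_j · x^v / x_{m(v)}` also lies in `J`. -/
def IsStable {K : Type*} [Field K] {n : ℕ} (J : Ideal (MvPolynomial (Fin n) K)) : Prop :=
  ∀ v : Fin n →₀ ℕ, monomial v (1 : K) ∈ J →
    ∀ m : Fin n, m ∈ v.support → (∀ i ∈ v.support, i ≤ m) →
      ∀ j : Fin n, j < m →
        monomial (v - Finsupp.single m 1 + Finsupp.single j 1) (1 : K) ∈ J

/-- For `n ≥ 2`, `a_1 ≥ ⋯ ≥ a_n ≥ 1` with `a_1 ≤ n-1` and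
`t = a_2 + ⋯ + a_n`, the truncation `I_{≥t}` of `I = (x_1^{a_1},…,x_n^{a_n})`
equals `(x_1,…,x_n)^t`. -/
theorem stmt0 {K : Type*} [Field K] {n : ℕ} (hn : 2 ≤ n) (a : Fin n → ℕ)
    (hdec : ∀ i j : Fin n, i ≤ j → a j ≤ a i) (hpos : ∀ i, 1 ≤ a i)
    (hbound : a ⟨0, by omega⟩ ≤ n - 1) :
    trunc (Ideal.span (Set.range fun i : Fin n => (X i : MvPolynomial (Fin n) K) ^ a i))
        (∑ i ∈ Finset.univ.erase (⟨0, by omega⟩ : Fin n), a i)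
      = (Ideal.span (Set.range (X : Fin n → MvPolynomial (Fin n) K))) ^
          (∑ i ∈ Finset.univ.erase (⟨0, by omega⟩ : Fin n), a i) := by
  set t := ∑ i ∈ Finset.univ.erase (⟨0, by omega⟩ : Fin n), a i with ht
  apply le_antisymm
  · rw [trunc, Ideal.span_le]
    rintro p ⟨v, rfl, hvI, hvt⟩
    exact Stmt0Aux.mono_mem_pow hvt
  · rw [Stmt0Aux.pow_span_X, Ideal.span_le]
    rintro p ⟨v, hv, rfl⟩
    simp only [Set.mem_setOf_eq] at hv
    apply Ideal.subset_span
    refine ⟨v, rfl, ?_, le_of_eq hv.symm⟩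
    have hI : Set.range (fun i : Fin n => (X i : MvPolynomial (Fin n) K) ^ a i)
        = (fun s => monomial s (1 : K)) '' Set.range (fun i => Finsupp.single i (a i)) := by
      ext p
      simp only [Set.mem_range, Set.mem_image, X_pow_eq_monomial]
      constructor
      · rintro ⟨i, rfl⟩; exact ⟨_, ⟨i, rfl⟩, rfl⟩
      · rintro ⟨s, ⟨i, rfl⟩, rfl⟩; exact ⟨i, rfl⟩
    rw [hI, Stmt0Aux.mono_mem_span_iff]
    by_contra hc
    push_neg at hc
    have hvi : ∀ i, v i < a i := by
      intro i
      have h := hc (Finsupp.single i (a i)) ⟨i, rfl⟩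
      rw [Finsupp.single_le_iff] at h
      omega
    have hsum : Stmt0Aux.deg v = ∑ i, v i := Stmt0Aux.deg_eq_sum v
    have h2 : ∑ i, v i + n ≤ ∑ i, a i := by
      calc ∑ i, v i + n = ∑ i : Fin n, (v i + 1) := by
            simp [Finset.sum_add_distrib, Finset.card_univ]
        _ ≤ ∑ i, a i := Finset.sum_le_sum fun i _ => hvi i
    have h3 : ∑ i, a i = a ⟨0, by omega⟩ + t :=
      (Finset.add_sum_erase _ a (Finset.mem_univ _)).symm
    omega
end
end

section
/- Let I(H) = (x^{b_1},...,x^{b_s}) be the inclusion ideal of a uniformly increasing hypergraph with edges E_1 ⊂ E_2 ⊂ ... ⊂ E_s, and let I^{[*]}(H) = ∩_{i=1}^s m^{a∖b_i} be its special dual (Alexander dual with respect to the containment vector a). Then the set of associated primes Ass(S/I^{[*]}(H)) is totally ordered by inclusion. -/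
open MvPolynomial

noncomputable section

/-- The containment vector of a hypergraph with edges `E`: `a j` is the number of
edges containing the vertex `j`. -/
def contVec {n s : ℕ} (E : Fin s → Finset (Fin n)) (j : Fin n) : ℕ :=
  (Finset.univ.filter fun i : Fin s => j ∈ E i).card

/-- The exponent vector `b_i` of the `i`-th minimal generator
`x^{b_i} = ∏_{x ∈ E_i} x^{s-i+1}` of the inclusion ideal (here `i : Fin s` is
zero-based, so the exponent is `s - i`). -/
def expVec {n s : ℕ} (E : Fin s → Finset (Fin n)) (i : Fin s) : Fin n →₀ ℕ :=
  Finsupp.ofSupportFinite (fun j => if j ∈ E i then s - i.val else 0) (Set.toFinite _)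

/-- The inclusion ideal `I(H)` of a uniformly increasing hypergraph. -/
def inclIdeal (K : Type*) [Field K] {n s : ℕ} (E : Fin s → Finset (Fin n)) :
    Ideal (MvPolynomial (Fin n) K) :=
  Ideal.span (Set.range fun i : Fin s => monomial (expVec E i) (1 : K))

/-- The special dual `I^{[*]}(H) = ⋂_i m^{a∖b_i}`: the Alexander dual of the inclusion
ideal with respect to the containment vector `a`. -/
def specialDual (K : Type*) [Field K] {n s : ℕ} (E : Fin s → Finset (Fin n)) :
    Ideal (MvPolynomial (Fin n) K) :=
  ⨅ i : Fin s, Ideal.span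
    ((fun j => (X j : MvPolynomial (Fin n) K) ^ (contVec E j + 1 - expVec E i j)) ''
      (E i : Set (Fin n)))

namespace Stmt8Aux


variable {K : Type*} [Field K] {n : ℕ}

open Classical in
/-- Restriction of a polynomial to the monomials satisfying `p`. -/
def restr (p : (Fin n →₀ ℕ) → Prop) (f : MvPolynomial (Fin n) K) : MvPolynomial (Fin n) K :=
  ∑ μ ∈ f.support.filter (fun μ => p μ), monomial μ (coeff μ f)

open Classical in
lemma coeff_restr (p : (Fin n →₀ ℕ) → Prop) (f : MvPolynomial (Fin n) K) (ν : Fin n →₀ ℕ) :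
    coeff ν (restr p f) = if p ν then coeff ν f else 0 := by
  classical
  rw [restr]
  rw [MvPolynomial.coeff_sum]
  by_cases hν : ν ∈ f.support.filter (fun μ => p μ)
  · rw [Finset.sum_eq_single ν]
    · simp [coeff_monomial, (Finset.mem_filter.mp hν).2]
    · intro b _ hb
      simp [coeff_monomial, hb]
    · intro h; exact absurd hν h
  · have : ∀ b ∈ f.support.filter (fun μ => p μ), coeff ν (monomial b (coeff b f)) = 0 := by
      intro b hb
      rcases eq_or_ne b ν with rfl | hbν
      · exact absurd hb hν
      · simp [coeff_monomial, hbν]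
    rw [Finset.sum_eq_zero this]
    by_cases hpν : p ν
    · have : ν ∉ f.support := fun h => hν (Finset.mem_filter.mpr ⟨h, hpν⟩)
      rw [if_pos hpν, MvPolynomial.notMem_support_iff.mp this]
    · rw [if_neg hpν]

/-- Key combinatorial lemma: if `r` has a monomial free of the variables in `F`, and `x`
has a monomial whose `F`-exponents are all below `e`, then so does `r * x`. -/
lemma key {F : Finset (Fin n)} {e : Fin n → ℕ} {r x : MvPolynomial (Fin n) K}
    (hr : ∃ μ ∈ r.support, ∀ t ∈ F, μ t = 0)
    (hx : ∃ μ ∈ x.support, ∀ t ∈ F, μ t < e t) :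
    ∃ μ ∈ (r * x).support, ∀ t ∈ F, μ t < e t := by
  classical
  obtain ⟨μ0, hμ0, hμ0F⟩ := hr
  -- B : monomials of x with small F-part
  set B : Finset (Fin n →₀ ℕ) := x.support.filter (fun μ => ∀ t ∈ F, μ t < e t) with hB
  have hBne : B.Nonempty := by
    obtain ⟨μ, hμ, hμF⟩ := hx
    exact ⟨μ, Finset.mem_filter.mpr ⟨hμ, hμF⟩⟩
  -- m1 : element of B of minimal F-weight
  obtain ⟨m1, hm1B, hm1min⟩ := Finset.exists_min_image B (fun μ => ∑ t ∈ F, μ t) hBne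
  have hm1x : m1 ∈ x.support := (Finset.mem_filter.mp hm1B).1
  have hm1F : ∀ t ∈ F, m1 t < e t := (Finset.mem_filter.mp hm1B).2
  set r1 : MvPolynomial (Fin n) K := restr (fun μ => ∀ t ∈ F, μ t = 0) r with hr1
  set x1 : MvPolynomial (Fin n) K := restr (fun μ => ∀ t ∈ F, μ t = m1 t) x with hx1
  have hr1ne : r1 ≠ 0 := by
    intro h
    have := coeff_restr (fun μ => ∀ t ∈ F, μ t = 0) r μ0
    rw [← hr1, h, if_pos hμ0F] at this
    exact MvPolynomial.mem_support_iff.mp hμ0 this.symm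
  have hx1ne : x1 ≠ 0 := by
    intro h
    have := coeff_restr (fun μ => ∀ t ∈ F, μ t = m1 t) x m1
    rw [← hx1, h, if_pos (fun t _ => rfl)] at this
    exact MvPolynomial.mem_support_iff.mp hm1x this.symm
  have hprod : r1 * x1 ≠ 0 := mul_ne_zero hr1ne hx1ne
  obtain ⟨μs, hμs⟩ : (r1 * x1).support.Nonempty :=
    Finset.nonempty_iff_ne_empty.mpr (fun h => hprod (MvPolynomial.support_eq_empty.mp h))
  -- support of restr
  have hsupr1 : ∀ μ ∈ r1.support, μ ∈ r.support ∧ ∀ t ∈ F, μ t = 0 := by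
    intro μ hμ
    have h1 := MvPolynomial.mem_support_iff.mp hμ
    rw [hr1, coeff_restr] at h1
    by_cases hp : ∀ t ∈ F, μ t = 0
    · rw [if_pos hp] at h1; exact ⟨MvPolynomial.mem_support_iff.mpr h1, hp⟩
    · rw [if_neg hp] at h1; exact absurd rfl h1
  have hsupx1 : ∀ μ ∈ x1.support, μ ∈ x.support ∧ ∀ t ∈ F, μ t = m1 t := by
    intro μ hμ
    have h1 := MvPolynomial.mem_support_iff.mp hμ
    rw [hx1, coeff_restr] at h1
    by_cases hp : ∀ t ∈ F, μ t = m1 t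
    · rw [if_pos hp] at h1; exact ⟨MvPolynomial.mem_support_iff.mpr h1, hp⟩
    · rw [if_neg hp] at h1; exact absurd rfl h1
  -- the F-part of μs equals that of m1
  have hμsF : ∀ t ∈ F, μs t = m1 t := by
    have := MvPolynomial.support_mul r1 x1 hμs
    rw [Finset.mem_add] at this
    obtain ⟨a, ha, b, hb, hab⟩ := this
    intro t ht
    have ha0 := (hsupr1 a ha).2 t ht
    have hb0 := (hsupx1 b hb).2 t ht
    rw [← hab]
    simp [Finsupp.add_apply, ha0, hb0]
  -- coefficient of μs in r*x equals that in r1*x1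
  have hcoeff : coeff μs (r * x) = coeff μs (r1 * x1) := by
    rw [MvPolynomial.coeff_mul, MvPolynomial.coeff_mul]
    apply Finset.sum_congr rfl
    intro ab hab
    have habsum : ab.1 + ab.2 = μs := Finset.HasAntidiagonal.mem_antidiagonal.mp hab
    by_cases hbx : coeff ab.2 x = 0
    · have : coeff ab.2 x1 = 0 := by
        rw [hx1, coeff_restr]
        split <;> simp [hbx]
      rw [hbx, this, mul_zero, mul_zero]
    · -- ab.2 ∈ supp x; show its F-part is exactly m1's F-part
      have hble : ∀ t ∈ F, ab.2 t ≤ m1 t := by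
        intro t ht
        have : ab.1 t + ab.2 t = μs t := by
          rw [← habsum]; simp [Finsupp.add_apply]
        have := this ▸ (hμsF t ht)
        omega
      have hbB : ab.2 ∈ B := by
        refine Finset.mem_filter.mpr ⟨MvPolynomial.mem_support_iff.mpr hbx, fun t ht => ?_⟩
        exact lt_of_le_of_lt (hble t ht) (hm1F t ht)
      have hwle : ∑ t ∈ F, m1 t ≤ ∑ t ∈ F, ab.2 t := hm1min _ hbB
      have hwge : ∑ t ∈ F, ab.2 t ≤ ∑ t ∈ F, m1 t := Finset.sum_le_sum hble
      have hweq : ∀ t ∈ F, ab.2 t = m1 t := by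
        have := (Finset.sum_eq_sum_iff_of_le hble).mp (le_antisymm hwge hwle)
        intro t ht; exact this t ht
      have haF : ∀ t ∈ F, ab.1 t = 0 := by
        intro t ht
        have h1 : ab.1 t + ab.2 t = μs t := by
          rw [← habsum]; simp [Finsupp.add_apply]
        have h2 := hμsF t ht
        have h3 := hweq t ht
        omega
      have e1 : coeff ab.1 r1 = coeff ab.1 r := by
        rw [hr1, coeff_restr, if_pos haF]
      have e2 : coeff ab.2 x1 = coeff ab.2 x := by
        rw [hx1, coeff_restr, if_pos hweq]
      rw [e1, e2]
  refine ⟨μs, ?_, fun t ht => ?_⟩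
  · rw [MvPolynomial.mem_support_iff, hcoeff]
    exact MvPolynomial.mem_support_iff.mp hμs
  · rw [hμsF t ht]; exact hm1F t ht


section
variable {K : Type*} [Field K] {n : ℕ}


variable {K : Type*} [Field K] {n : ℕ}

lemma mem_span_pow_image {F : Finset (Fin n)} {c : Fin n → ℕ} {f : MvPolynomial (Fin n) K} :
    f ∈ Ideal.span ((fun j => (X j : MvPolynomial (Fin n) K) ^ c j) '' (F : Set (Fin n))) ↔
      ∀ μ ∈ f.support, ∃ t ∈ F, c t ≤ μ t := by
  have himg : (fun j => (X j : MvPolynomial (Fin n) K) ^ c j) '' (F : Set (Fin n)) =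
      (fun s => monomial s (1 : K)) '' ((fun j => Finsupp.single j (c j)) '' (F : Set (Fin n))) := by
    rw [Set.image_image]
    apply Set.image_congr
    intro j _
    rw [X_pow_eq_monomial]
  rw [himg, mem_ideal_span_monomial_image]
  constructor
  · intro h μ hμ
    obtain ⟨si, hsi, hle⟩ := h μ hμ
    obtain ⟨t, htF, rfl⟩ := hsi
    exact ⟨t, htF, by simpa using Finsupp.single_le_iff.mp hle⟩
  · intro h μ hμ
    obtain ⟨t, htF, hle⟩ := h μ hμ
    exact ⟨Finsupp.single t (c t), ⟨t, htF, rfl⟩, Finsupp.single_le_iff.mpr hle⟩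

end

lemma prime_eq_span {K : Type*} [Field K] {n s : ℕ} (E : Fin s → Finset (Fin n))
    (hmono : Monotone E) {P : Ideal (MvPolynomial (Fin n) K)}
    (hP : P ∈ associatedPrimes (MvPolynomial (Fin n) K)
      (MvPolynomial (Fin n) K ⧸ specialDual K E)) :
    ∃ m : Fin s, P = Ideal.span (X '' (E m : Set (Fin n))) := by
  classical
  obtain ⟨hPp, x, hxann⟩ := isAssociatedPrime_iff.mp hP
  obtain ⟨x', rfl⟩ := Ideal.Quotient.mk_surjective x
  set I := specialDual K E with hI
  set J : Fin s → Ideal (MvPolynomial (Fin n) K) := fun i => Ideal.span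
    ((fun j => (X j : MvPolynomial (Fin n) K) ^ (contVec E j + 1 - expVec E i j)) ''
      (E i : Set (Fin n))) with hJ
  have hIJ : I = ⨅ i, J i := rfl
  have hsmul : ∀ r : MvPolynomial (Fin n) K,
      r • (Ideal.Quotient.mk I x') = Ideal.Quotient.mk I (r * x') := by
    intro r
    have h1 : (Ideal.Quotient.mk I) (r * x') = Submodule.Quotient.mk (p := I) (r • x') := by
      rw [smul_eq_mul]; rfl
    rw [h1, Submodule.Quotient.mk_smul]
    rfl
  have hmem : ∀ r : MvPolynomial (Fin n) K, r ∈ P ↔ r * x' ∈ I := by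
    intro r
    rw [hxann, Submodule.mem_colon_singleton, Submodule.mem_bot, hsmul,
      Ideal.Quotient.eq_zero_iff_mem]
  have hx'I : x' ∉ I := by
    intro h
    apply hPp.ne_top
    rw [hxann, Ideal.Quotient.eq_zero_iff_mem.mpr h, eq_top_iff]
    intro r _
    simp [Submodule.mem_colon_singleton]
  have hx'J : ∃ i, x' ∉ J i := by
    by_contra h
    push_neg at h
    exact hx'I (by rw [hIJ]; exact Ideal.mem_iInf.mpr h)
  set T := Finset.univ.filter (fun i : Fin s => x' ∉ J i) with hT
  have hTne : T.Nonempty := by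
    obtain ⟨i, hi⟩ := hx'J
    exact ⟨i, Finset.mem_filter.mpr ⟨Finset.mem_univ _, hi⟩⟩
  set m := T.min' hTne with hm
  have hmT : m ∈ T := T.min'_mem hTne
  have hx'Jm : x' ∉ J m := (Finset.mem_filter.mp hmT).2
  refine ⟨m, le_antisymm ?_ ?_⟩
  · -- P ≤ span (X '' E m)
    intro r hr
    by_contra hrp
    have hrwit : ∃ μ ∈ r.support, ∀ t ∈ E m, μ t = 0 := by
      rw [mem_ideal_span_X_image] at hrp
      push_neg at hrp
      obtain ⟨μ, hμ, hμ2⟩ := hrp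
      exact ⟨μ, hμ, fun t ht => by simpa using hμ2 t ht⟩
    have hxwit : ∃ μ ∈ x'.support, ∀ t ∈ E m,
        μ t < contVec E t + 1 - expVec E m t := by
      rw [hJ] at hx'Jm
      simp only [mem_span_pow_image] at hx'Jm
      push_neg at hx'Jm
      obtain ⟨μ, hμ, hμ2⟩ := hx'Jm
      exact ⟨μ, hμ, hμ2⟩
    obtain ⟨μ, hμ, hμ2⟩ := key hrwit hxwit
    have hrx : r * x' ∈ J m := by
      have := (hmem r).mp hr
      rw [hIJ] at this
      exact Ideal.mem_iInf.mp this m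
    rw [hJ, mem_span_pow_image] at hrx
    obtain ⟨t, ht, hle⟩ := hrx μ hμ
    exact absurd hle (not_le.mpr (hμ2 t ht))
  · -- span (X '' E m) ≤ P
    rw [Ideal.span_le]
    rintro _ ⟨t, htE, rfl⟩
    have htE' : t ∈ E m := htE
    have hpow : (X t : MvPolynomial (Fin n) K) ^ (contVec E t + 1) * x' ∈ I := by
      rw [hIJ]
      refine Ideal.mem_iInf.mpr fun i => ?_
      by_cases hxi : x' ∈ J i
      · exact Ideal.mul_mem_left _ _ hxi
      · have hmi : m ≤ i := T.min'_le i (Finset.mem_filter.mpr ⟨Finset.mem_univ _, hxi⟩)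
        have htEi : t ∈ E i := hmono hmi htE'
        have hgen : (X t : MvPolynomial (Fin n) K) ^ (contVec E t + 1 - expVec E i t) ∈ J i :=
          Ideal.subset_span ⟨t, htEi, rfl⟩
        have hsplit : (X t : MvPolynomial (Fin n) K) ^ (contVec E t + 1) * x' =
            (X t) ^ (contVec E t + 1 - expVec E i t) *
              ((X t) ^ (contVec E t + 1 - (contVec E t + 1 - expVec E i t)) * x') := by
          rw [← mul_assoc, ← pow_add]
          congr 2
          omega
        rw [hsplit]
        exact Ideal.mul_mem_right _ _ hgen
    have : (X t : MvPolynomial (Fin n) K) ^ (contVec E t + 1) ∈ P := (hmem _).mpr hpow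
    exact hPp.mem_of_pow_mem _ this


end Stmt8Aux

/-- The associated primes of `S / I^{[*]}(H)` are totally ordered by
inclusion, where `I^{[*]}(H)` is the special dual of the inclusion ideal of a
uniformly increasing hypergraph. -/
theorem stmt8 {K : Type*} [Field K]
    {n s d : ℕ} (E : Fin s → Finset (Fin n)) (hs : 0 < s) (hd : 1 ≤ d)
    (hmono : Monotone E) (hcard1 : 2 ≤ (E ⟨0, hs⟩).card)
    (hstep : ∀ i : Fin s, ∀ h : i.val + 1 < s, (E ⟨i.val + 1, h⟩).card = (E i).card + d) :
    ∀ P ∈ associatedPrimes (MvPolynomial (Fin n) K)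
        (MvPolynomial (Fin n) K ⧸ specialDual K E),
      ∀ Q ∈ associatedPrimes (MvPolynomial (Fin n) K)
        (MvPolynomial (Fin n) K ⧸ specialDual K E),
      P ≤ Q ∨ Q ≤ P := by
  intro P hP Q hQ
  obtain ⟨m, rfl⟩ := Stmt8Aux.prime_eq_span E hmono hP
  obtain ⟨m', rfl⟩ := Stmt8Aux.prime_eq_span E hmono hQ
  rcases le_total m m' with h | h
  · exact Or.inl (Ideal.span_mono (Set.image_mono (Finset.coe_subset.mpr (hmono h))))
  · exact Or.inr (Ideal.span_mono (Set.image_mono (Finset.coe_subset.mpr (hmono h))))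
end
end

section
/- Let I^{[*]}(H) be the special dual of the inclusion ideal of a uniformly increasing hypergraph H on n vertices with containment vector a (with entries a_1 ≥ ... ≥ a_n). Then reg(I^{[*]}(H)) ≤ a_2 + a_3 + ... + a_n. -/
open MvPolynomial

noncomputable section

/-- `RegLE I e` says that the Castelnuovo–Mumford regularity of `I` is at most `e`.
This is expressed through the standard characterization: there exists a graded free
resolution `⋯ → F_i → ⋯ → F_0 → I → 0` of `I` (with `F_i` free on a finite set `σ i`
of homogeneous generators of degrees `deg i`, the differentials and the augmentation
being graded of degree `0`) in which `F_i` is generated in degrees `≤ e + i` for all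
`i`.  The minimal graded free resolution realizes `reg I` exactly, so this holds iff
`reg I ≤ e`. -/
def RegLE {K : Type*} [Field K] {n : ℕ} (I : Ideal (MvPolynomial (Fin n) K)) (e : ℕ) :
    Prop :=
  ∃ (σ : ℕ → Type) (_ : ∀ i, Finite (σ i)) (deg : ∀ i, σ i → ℕ)
    (d : ∀ i : ℕ, (σ (i + 1) →₀ MvPolynomial (Fin n) K) →ₗ[MvPolynomial (Fin n) K]
        (σ i →₀ MvPolynomial (Fin n) K))
    (ε : (σ 0 →₀ MvPolynomial (Fin n) K) →ₗ[MvPolynomial (Fin n) K]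
        MvPolynomial (Fin n) K),
    -- the augmentation maps onto `I`
    LinearMap.range ε = I ∧
    -- the augmentation is graded: the image of a generator of degree `deg 0 k`
    -- is homogeneous of degree `deg 0 k`
    (∀ k : σ 0, ε (Finsupp.single k 1) ∈ homogeneousSubmodule (Fin n) K (deg 0 k)) ∧
    -- the differentials are graded of degree `0`
    (∀ (i : ℕ) (j : σ (i + 1)) (k : σ i),
        (d i (Finsupp.single j 1)) k ∈
            homogeneousSubmodule (Fin n) K (deg (i + 1) j - deg i k) ∧
          (deg (i + 1) j < deg i k → (d i (Finsupp.single j 1)) k = 0)) ∧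
    -- exactness
    LinearMap.range (d 0) = LinearMap.ker ε ∧
    (∀ i : ℕ, LinearMap.range (d (i + 1)) = LinearMap.ker (d i)) ∧
    -- `F_i` is generated in degrees at most `e + i`
    (∀ (i : ℕ) (j : σ i), deg i j ≤ e + i)

noncomputable section Taylor

variable {K : Type*} [Field K] {n N : ℕ}

/-- ambient polynomial ring -/
local notation "R" => MvPolynomial (Fin n) K

/-- the free module at homological position `i` -/
abbrev Fi (K : Type*) [Field K] (n N i : ℕ) : Type _ :=
  (Fin (i+1) → Fin N) →₀ MvPolynomial (Fin n) K

variable (m : Fin N → (Fin n →₀ ℕ))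

/-- lcm (sup) of the exponent vectors of a tuple -/
def Lt {k : ℕ} (t : Fin k → Fin N) : Fin n →₀ ℕ :=
  Finset.univ.sup fun l => m (t l)

lemma Lt_mem_le {k : ℕ} (t : Fin k → Fin N) (l : Fin k) : m (t l) ≤ Lt m t := by
  rw [Lt]; exact Finset.le_sup (f := fun l => m (t l)) (Finset.mem_univ l)

lemma Lt_comp_le {k k' : ℕ} (t : Fin k → Fin N) (f : Fin k' → Fin k) :
    Lt m (t ∘ f) ≤ Lt m t :=
  Finset.sup_le fun l _ => Lt_mem_le m t (f l)

lemma Lt_cons {k : ℕ} (j : Fin N) (t : Fin k → Fin N) :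
    Lt m (Fin.cons j t) = m j ⊔ Lt m t := by
  apply le_antisymm
  · apply Finset.sup_le
    intro l _
    cases l using Fin.cases with
    | zero => simp [le_sup_left]
    | succ l => exact le_trans (Lt_mem_le m t l) le_sup_right
  · apply sup_le
    · simpa using Lt_mem_le m (Fin.cons j t) 0
    · exact Finset.sup_le fun l _ => by
        simpa using Lt_mem_le m (Fin.cons j t) l.succ

/-- the Taylor differential -/
def dT (i : ℕ) : Fi K n N (i+1) →ₗ[R] Fi K n N i :=
  Finsupp.lsum R fun t => ∑ k : Fin (i+2),
    (Finsupp.lsingle (t ∘ k.succAbove)).comp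
      (LinearMap.mulLeft R
        (monomial (Lt m t - Lt m (t ∘ k.succAbove)) ((-1 : K)^(k : ℕ))))

/-- the augmentation -/
def εT : Fi K n N 0 →ₗ[R] R :=
  Finsupp.lsum R fun t => LinearMap.mulLeft R (monomial (Lt m t) (1 : K))

lemma dT_single (i : ℕ) (t : Fin (i+2) → Fin N) (p : R) :
    dT m i (Finsupp.single t p) = ∑ k : Fin (i+2),
      Finsupp.single (t ∘ k.succAbove)
        (monomial (Lt m t - Lt m (t ∘ k.succAbove)) ((-1 : K)^(k : ℕ)) * p) := by
  simp only [dT, Finsupp.lsum_single, LinearMap.sum_apply, LinearMap.comp_apply,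
    LinearMap.mulLeft_apply, Finsupp.lsingle_apply]

lemma εT_single (t : Fin 1 → Fin N) (p : R) :
    εT m (Finsupp.single t p) = monomial (Lt m t) (1 : K) * p := by
  simp only [εT, Finsupp.lsum_single, LinearMap.mulLeft_apply]


/-- the `K`-basis of `Fi` -/
def BB (K : Type*) [Field K] (n N : ℕ) (i : ℕ) :
    Module.Basis ((Σ _ : (Fin (i+1) → Fin N), (Fin n →₀ ℕ))) K (Fi K n N i) :=
  Finsupp.basis fun _ => basisMonomials (Fin n) K

lemma BB_apply (i : ℕ) (t : Fin (i+1) → Fin N) (u : Fin n →₀ ℕ) :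
    BB K n N i ⟨t, u⟩ = Finsupp.single t (monomial u (1 : K)) := by
  rw [Module.Basis.apply_eq_iff]
  ext ⟨t', u'⟩
  classical
  simp only [BB, Finsupp.basis_repr, basisMonomials, Finsupp.basisSingleOne_repr,
    LinearEquiv.refl_apply, Finsupp.single_apply, Sigma.mk.inj_iff]
  by_cases ht : t = t'
  · subst ht
    rw [if_pos rfl]
    by_cases hu : u = u'
    · subst hu
      rw [if_pos ⟨rfl, HEq.rfl⟩]
      exact (MvPolynomial.coeff_monomial u u (1:K)).trans (if_pos rfl)
    · rw [if_neg (fun h => hu (eq_of_heq h.2))]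
      exact (MvPolynomial.coeff_monomial u' u (1:K)).trans (if_neg hu)
  · rw [if_neg ht, if_neg (fun h => ht h.1)]
    simp


/-- monomials dividing `w` among the generators -/
def TT (w : Fin n →₀ ℕ) : Finset (Fin N) :=
  Finset.univ.filter fun g => m g ≤ w

/-- the least generator index dividing `w` -/
def jmin (w : Fin n →₀ ℕ) (h : (TT m w).Nonempty) : Fin N := (TT m w).min' h

lemma jmin_le (w : Fin n →₀ ℕ) (h : (TT m w).Nonempty) : m (jmin m w h) ≤ w := by
  have := (TT m w).min'_mem h
  simp only [TT, Finset.mem_filter] at this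
  exact this.2

lemma TT_nonempty {k : ℕ} (t : Fin (k+1) → Fin N) (u : Fin n →₀ ℕ) :
    (TT m (u + Lt m t)).Nonempty :=
  ⟨t 0, by
    simp only [TT, Finset.mem_filter]
    exact ⟨Finset.mem_univ _, le_trans (Lt_mem_le m t 0) le_add_self⟩⟩

/-- the contracting homotopy on basis elements -/
def hfun (i : ℕ) (t : Fin (i+1) → Fin N) (u : Fin n →₀ ℕ) : Fi K n N (i+1) :=
  Finsupp.single
    (Fin.cons (jmin m (u + Lt m t) (TT_nonempty m t u)) t)
    (monomial ((u + Lt m t) -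
        Lt m (Fin.cons (jmin m (u + Lt m t) (TT_nonempty m t u)) t)) (1 : K))

/-- the contracting homotopy -/
def HT (i : ℕ) : Fi K n N i →ₗ[K] Fi K n N (i+1) :=
  (BB K n N i).constr K fun p => hfun m i p.1 p.2

/-- the contracting homotopy at the bottom -/
def H' : MvPolynomial (Fin n) K →ₗ[K] Fi K n N 0 :=
  (basisMonomials (Fin n) K).constr K fun u =>
    if h : (TT m u).Nonempty then
      Finsupp.single (fun _ => jmin m u h) (monomial (u - m (jmin m u h)) (1 : K))
    else 0

lemma HT_apply (i : ℕ) (t : Fin (i+1) → Fin N) (u : Fin n →₀ ℕ) :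
    HT m i (Finsupp.single t (monomial u (1 : K))) = hfun m i t u := by
  rw [← BB_apply, HT, Module.Basis.constr_basis]

lemma H'_apply (u : Fin n →₀ ℕ) :
    H' m (monomial u (1 : K)) =
      if h : (TT m u).Nonempty then
        Finsupp.single (fun _ : Fin 1 => jmin m u h)
          (monomial (u - m (jmin m u h)) (1 : K))
      else 0 := by
  have : (monomial u (1 : K) : MvPolynomial (Fin n) K) = basisMonomials (Fin n) K u := by
    simp
  rw [this, H', Module.Basis.constr_basis]


lemma cons_comp_zero (p : ℕ) (j : Fin N) (t : Fin (p+1) → Fin N) :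
    (Fin.cons j t : Fin (p+2) → Fin N) ∘ (0 : Fin (p+2)).succAbove = t := by
  funext l
  simp [Fin.succAbove_zero]

lemma cons_comp_succ (p : ℕ) (j : Fin N) (t : Fin (p+1) → Fin N) (k : Fin (p+1)) :
    (Fin.cons j t : Fin (p+2) → Fin N) ∘ (k.succ : Fin (p+2)).succAbove =
      Fin.cons j (t ∘ k.succAbove) := by
  funext l
  cases l using Fin.cases with
  | zero => simp [Fin.succ_succAbove_zero]
  | succ l => simp [Fin.succ_succAbove_succ]

lemma dT_single_norm (i : ℕ) (t : Fin (i+2) → Fin N) (v : Fin n →₀ ℕ)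
    (hv : Lt m t ≤ v) :
    dT m i (Finsupp.single t (monomial (v - Lt m t) (1:K))) =
      ∑ k : Fin (i+2), ((-1:K)^(k:ℕ)) •
        Finsupp.single (t ∘ k.succAbove)
          (monomial (v - Lt m (t ∘ k.succAbove)) (1:K)) := by
  rw [dT_single]
  refine Finset.sum_congr rfl fun k _ => ?_
  rw [monomial_mul, mul_one]
  rw [show Lt m t - Lt m (t ∘ k.succAbove) + (v - Lt m t)
      = v - Lt m (t ∘ k.succAbove) from by
    rw [add_comm]; exact tsub_add_tsub_cancel hv (Lt_comp_le m t k.succAbove)]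
  rw [Finsupp.smul_single, MvPolynomial.smul_monomial, smul_eq_mul, mul_one]

lemma εT_single_norm (t : Fin 1 → Fin N) (v : Fin n →₀ ℕ) (hv : Lt m t ≤ v) :
    εT m (Finsupp.single t (monomial (v - Lt m t) (1:K))) = monomial v (1:K) := by
  rw [εT_single, monomial_mul, mul_one, add_comm, tsub_add_cancel_of_le hv]

lemma hfun_of_le (i : ℕ) (t : Fin (i+1) → Fin N) (w : Fin n →₀ ℕ)
    (h : Lt m t ≤ w) (hne : (TT m w).Nonempty) :
    hfun m i t (w - Lt m t) =
      Finsupp.single (Fin.cons (jmin m w hne) t)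
        (monomial (w - Lt m (Fin.cons (jmin m w hne) t)) (1:K)) := by
  have hw : (w - Lt m t) + Lt m t = w := tsub_add_cancel_of_le h
  simp only [hfun, hw]


set_option maxHeartbeats 2000000 in
lemma homotopy_id (i : ℕ) :
    ((dT m (i+1)).restrictScalars K).comp (HT m (i+1)) +
      (HT m i).comp ((dT m i).restrictScalars K) = LinearMap.id := by
  apply Module.Basis.ext (BB K n N (i+1))
  rintro ⟨t, u⟩
  rw [BB_apply]
  have hLt : Lt m t ≤ u + Lt m t := le_add_self
  have hu : u = (u + Lt m t) - Lt m t := by rw [add_tsub_cancel_right]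
  have hne : (TT m (u + Lt m t)).Nonempty := TT_nonempty m t u
  set w := u + Lt m t with hw
  set j0 := jmin m w hne with hj0
  have hj0w : m j0 ≤ w := jmin_le m w hne
  have hconsle : Lt m (Fin.cons j0 t : Fin (i+3) → Fin N) ≤ w := by
    rw [Lt_cons]; exact sup_le hj0w hLt
  simp only [LinearMap.add_apply, LinearMap.comp_apply,
    LinearMap.restrictScalars_apply, LinearMap.id_apply]
  have e1 : HT m (i+1) (Finsupp.single t (monomial u (1:K))) =
      Finsupp.single (Fin.cons j0 t : Fin (i+3) → Fin N)
        (monomial (w - Lt m (Fin.cons j0 t : Fin (i+3) → Fin N)) (1:K)) := by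
    rw [hu, HT_apply, hfun_of_le m (i+1) t w hLt hne]
  rw [e1]
  have e2 : dT m (i+1) (Finsupp.single (Fin.cons j0 t : Fin (i+3) → Fin N)
        (monomial (w - Lt m (Fin.cons j0 t : Fin (i+3) → Fin N)) (1:K))) =
      Finsupp.single t (monomial u (1:K)) +
        ∑ k : Fin (i+2), ((-1:K)^((k:ℕ)+1)) •
          Finsupp.single (Fin.cons j0 (t ∘ k.succAbove) : Fin (i+2) → Fin N)
            (monomial (w - Lt m (Fin.cons j0 (t ∘ k.succAbove) : Fin (i+2) → Fin N))
              (1:K)) := by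
    rw [dT_single_norm m (i+1) _ w hconsle, Fin.sum_univ_succ]
    congr 1
    · rw [cons_comp_zero (i+1) j0 t]
      rw [Fin.val_zero, pow_zero, one_smul, ← hu]
    · refine Finset.sum_congr rfl fun k _ => ?_
      rw [cons_comp_succ (i+1) j0 t k, Fin.val_succ]
  rw [e2]
  have e3 : dT m i (Finsupp.single t (monomial u (1:K))) =
      ∑ k : Fin (i+2), ((-1:K)^(k:ℕ)) •
        Finsupp.single (t ∘ k.succAbove)
          (monomial (w - Lt m (t ∘ k.succAbove)) (1:K)) := by
    rw [hu, dT_single_norm m i t w hLt]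
  rw [e3, map_sum]
  have e4 : ∀ k : Fin (i+2),
      HT m i (((-1:K)^(k:ℕ)) • Finsupp.single (t ∘ k.succAbove)
          (monomial (w - Lt m (t ∘ k.succAbove)) (1:K))) =
      ((-1:K)^(k:ℕ)) •
        Finsupp.single (Fin.cons j0 (t ∘ k.succAbove) : Fin (i+2) → Fin N)
          (monomial (w - Lt m (Fin.cons j0 (t ∘ k.succAbove) : Fin (i+2) → Fin N))
            (1:K)) := by
    intro k
    rw [map_smul, HT_apply, hfun_of_le m i (t ∘ k.succAbove) w
      (le_trans (Lt_comp_le m t k.succAbove) hLt) hne]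
  rw [Finset.sum_congr rfl fun k _ => e4 k]
  rw [add_assoc, ← Finset.sum_add_distrib]
  have e5 : ∀ k : Fin (i+2), ((-1:K)^((k:ℕ)+1)) •
        Finsupp.single (Fin.cons j0 (t ∘ k.succAbove) : Fin (i+2) → Fin N)
          (monomial (w - Lt m (Fin.cons j0 (t ∘ k.succAbove) : Fin (i+2) → Fin N)) (1:K)) +
      ((-1:K)^(k:ℕ)) •
        Finsupp.single (Fin.cons j0 (t ∘ k.succAbove) : Fin (i+2) → Fin N)
          (monomial (w - Lt m (Fin.cons j0 (t ∘ k.succAbove) : Fin (i+2) → Fin N)) (1:K))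
        = 0 := by
    intro k
    rw [pow_succ, mul_neg_one, neg_smul, neg_add_cancel]
  rw [Finset.sum_congr rfl fun k _ => e5 k, Finset.sum_const_zero, add_zero]


lemma Lt_const1 (j : Fin N) : Lt m (fun _ : Fin 1 => j) = m j := by
  apply le_antisymm
  · exact Finset.sup_le fun l _ => le_rfl
  · exact Lt_mem_le m (fun _ : Fin 1 => j) 0

lemma cons_fin1 (j : Fin N) (x : Fin 0 → Fin N) :
    (Fin.cons j x : Fin 1 → Fin N) = fun _ => j := by
  funext l
  cases l using Fin.cases with
  | zero => rfl
  | succ l => exact absurd l.2 (by omega)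

set_option maxHeartbeats 2000000 in
lemma homotopy_id0 :
    ((dT m 0).restrictScalars K).comp (HT m 0) +
      (H' m).comp ((εT m).restrictScalars K) = LinearMap.id := by
  apply Module.Basis.ext (BB K n N 0)
  rintro ⟨t, u⟩
  rw [BB_apply]
  have hLt : Lt m t ≤ u + Lt m t := le_add_self
  have hu : u = (u + Lt m t) - Lt m t := by rw [add_tsub_cancel_right]
  have hne : (TT m (u + Lt m t)).Nonempty := TT_nonempty m t u
  set w := u + Lt m t with hw
  set j0 := jmin m w hne with hj0
  have hj0w : m j0 ≤ w := jmin_le m w hne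
  have hconsle : Lt m (Fin.cons j0 t : Fin 2 → Fin N) ≤ w := by
    rw [Lt_cons]; exact sup_le hj0w hLt
  simp only [LinearMap.add_apply, LinearMap.comp_apply,
    LinearMap.restrictScalars_apply, LinearMap.id_apply]
  have e1 : HT m 0 (Finsupp.single t (monomial u (1:K))) =
      Finsupp.single (Fin.cons j0 t : Fin 2 → Fin N)
        (monomial (w - Lt m (Fin.cons j0 t : Fin 2 → Fin N)) (1:K)) := by
    rw [hu, HT_apply, hfun_of_le m 0 t w hLt hne]
  rw [e1]
  have e2 : dT m 0 (Finsupp.single (Fin.cons j0 t : Fin 2 → Fin N)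
        (monomial (w - Lt m (Fin.cons j0 t : Fin 2 → Fin N)) (1:K))) =
      Finsupp.single t (monomial u (1:K)) +
        ∑ k : Fin 1, ((-1:K)^((k:ℕ)+1)) •
          Finsupp.single (Fin.cons j0 (t ∘ k.succAbove) : Fin 1 → Fin N)
            (monomial (w - Lt m (Fin.cons j0 (t ∘ k.succAbove) : Fin 1 → Fin N))
              (1:K)) := by
    rw [dT_single_norm m 0 _ w hconsle, Fin.sum_univ_succ]
    congr 1
    · rw [cons_comp_zero 0 j0 t]
      rw [Fin.val_zero, pow_zero, one_smul, ← hu]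
    · refine Finset.sum_congr rfl fun k _ => ?_
      rw [cons_comp_succ 0 j0 t k, Fin.val_succ]
  rw [e2]
  have e3 : εT m (Finsupp.single t (monomial u (1:K))) = monomial w (1:K) := by
    rw [hu, εT_single_norm m t w hLt]
  rw [e3]
  have e4 : H' m (monomial w (1:K)) =
      Finsupp.single (fun _ : Fin 1 => j0) (monomial (w - m j0) (1:K)) := by
    rw [H'_apply, dif_pos hne]
  rw [e4]
  have e5 : ∑ k : Fin 1, ((-1:K)^((k:ℕ)+1)) •
          Finsupp.single (Fin.cons j0 (t ∘ k.succAbove) : Fin 1 → Fin N)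
            (monomial (w - Lt m (Fin.cons j0 (t ∘ k.succAbove) : Fin 1 → Fin N))
              (1:K)) =
      - Finsupp.single (fun _ : Fin 1 => j0) (monomial (w - m j0) (1:K)) := by
    rw [Fin.sum_univ_one, cons_fin1, Lt_const1]
    rw [Fin.val_zero, pow_one, neg_smul, one_smul]
  rw [e5, add_assoc, neg_add_cancel, add_zero]


lemma succAbove_val {p : ℕ} (k : Fin (p+1)) (l : Fin p) :
    ((k.succAbove l : Fin (p+1)) : ℕ) =
      if (l:ℕ) < (k:ℕ) then (l:ℕ) else (l:ℕ)+1 := by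
  rcases lt_or_ge l.castSucc k with h | h
  · rw [Fin.succAbove_of_castSucc_lt _ _ h, Fin.coe_castSucc,
      if_pos (by simpa [Fin.lt_def] using h)]
  · rw [Fin.succAbove_of_le_castSucc _ _ h, Fin.val_succ,
      if_neg (by simpa [Fin.le_def, not_lt] using h)]

lemma omit_omit {p : ℕ} (k k' : Fin (p+2)) (l l' : Fin (p+1))
    (h : (l:ℕ) < (k:ℕ)) (hk' : (k':ℕ) = (l:ℕ)) (hl' : (l':ℕ) = (k:ℕ) - 1) :
    k.succAbove ∘ l.succAbove = k'.succAbove ∘ l'.succAbove := by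
  funext x
  apply Fin.ext
  have hx := x.isLt
  have hk := k.isLt
  have hl := l.isLt
  simp only [Function.comp_apply, succAbove_val]
  split_ifs <;> omega

lemma sign_cancel {M : Type*} [AddCommGroup M] [Module K M] (a b : ℕ)
    (h : a + 1 = b ∨ b + 1 = a) (x : M) :
    ((-1:K)^a) • x + ((-1:K)^b) • x = 0 := by
  rcases h with h | h
  · rw [← h, pow_succ, mul_neg_one, neg_smul, add_neg_cancel]
  · rw [← h, pow_succ, mul_neg_one, neg_smul, neg_add_cancel]

set_option maxHeartbeats 2000000 in
lemma dd_zero (i : ℕ) : (dT (K := K) m i).comp (dT (K := K) m (i+1)) = 0 := by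
  apply Finsupp.lhom_ext'
  intro t
  apply LinearMap.ext_ring
  simp only [LinearMap.comp_apply, Finsupp.lsingle_apply, LinearMap.zero_apply,
    LinearMap.zero_comp]
  have h1 : Finsupp.single t (1 : MvPolynomial (Fin n) K) =
      Finsupp.single t (monomial (Lt m t - Lt m t) (1:K)) := by
    rw [tsub_self, monomial_zero', C_1]
  rw [h1, dT_single_norm m (i+1) t (Lt m t) le_rfl, map_sum]
  have h2 : ∀ k : Fin (i+3),
      dT m i (((-1:K)^(k:ℕ)) • Finsupp.single (t ∘ k.succAbove)
        (monomial (Lt m t - Lt m (t ∘ k.succAbove)) (1:K))) =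
      ∑ l : Fin (i+2), ((-1:K)^((k:ℕ)+(l:ℕ))) •
        Finsupp.single (t ∘ (k.succAbove ∘ l.succAbove))
          (monomial (Lt m t - Lt m (t ∘ (k.succAbove ∘ l.succAbove))) (1:K)) := by
    intro k
    rw [LinearMap.map_smul_of_tower,
      dT_single_norm m i (t ∘ k.succAbove) (Lt m t) (Lt_comp_le m t k.succAbove),
      Finset.smul_sum]
    refine Finset.sum_congr rfl fun l _ => ?_
    rw [smul_smul, ← pow_add]
    rfl
  rw [Finset.sum_congr rfl fun k _ => h2 k, ← Finset.sum_product']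
  apply Finset.sum_ninvolution
    (g := fun p : Fin (i+3) × Fin (i+2) =>
      if h : (p.2:ℕ) < (p.1:ℕ) then
        (⟨(p.2:ℕ), by have := p.2.isLt; omega⟩, ⟨(p.1:ℕ)-1, by have := p.1.isLt; omega⟩)
      else
        (⟨(p.2:ℕ)+1, by have := p.2.isLt; omega⟩, ⟨(p.1:ℕ), by
          have := p.2.isLt; omega⟩))
  · rintro ⟨k, l⟩
    by_cases h : (l:ℕ) < (k:ℕ)
    · rw [dif_pos h]
      have hco : (k.succAbove ∘ l.succAbove : Fin (i+1) → Fin (i+3)) =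
          ((⟨(l:ℕ), by have := l.isLt; omega⟩ : Fin (i+3)).succAbove ∘
            ((⟨(k:ℕ)-1, by have := k.isLt; omega⟩ : Fin (i+2)).succAbove)) :=
        omit_omit _ _ _ _ h rfl rfl
      rw [← hco]
      exact sign_cancel ((k:ℕ)+(l:ℕ)) ((l:ℕ)+((k:ℕ)-1)) (Or.inr (by omega)) _
    · rw [dif_neg h]
      have hco : (k.succAbove ∘ l.succAbove : Fin (i+1) → Fin (i+3)) =
          ((⟨(l:ℕ)+1, by have := l.isLt; omega⟩ : Fin (i+3)).succAbove ∘
            ((⟨(k:ℕ), by have := l.isLt; omega⟩ : Fin (i+2)).succAbove)) :=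
        (omit_omit _ k _ l (by show (k:ℕ) < (l:ℕ)+1; omega) rfl
          (by show (l:ℕ) = (l:ℕ)+1-1; omega)).symm
      rw [← hco]
      exact sign_cancel ((k:ℕ)+(l:ℕ)) (((l:ℕ)+1)+(k:ℕ)) (Or.inl (by omega)) _
  · rintro ⟨k, l⟩
    intro _
    by_cases h : (l:ℕ) < (k:ℕ)
    · rw [dif_pos h]
      intro heq
      rw [Prod.ext_iff] at heq
      have : (l:ℕ) = (k:ℕ) := congrArg Fin.val heq.1
      omega
    · rw [dif_neg h]
      intro heq
      rw [Prod.ext_iff] at heq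
      have : (l:ℕ)+1 = (k:ℕ) := congrArg Fin.val heq.1
      omega
  · rintro ⟨k, l⟩
    simp [Finset.mem_product]
  · rintro ⟨k, l⟩
    by_cases h : (l:ℕ) < (k:ℕ)
    · rw [dif_pos h, dif_neg (show ¬((k:ℕ)-1 < (l:ℕ)) by omega)]
      refine Prod.ext ?_ ?_
      · exact Fin.ext (by show (k:ℕ)-1+1 = (k:ℕ); omega)
      · exact Fin.ext rfl
    · rw [dif_neg h, dif_pos (show (k:ℕ) < (l:ℕ)+1 by omega)]
      refine Prod.ext ?_ ?_
      · exact Fin.ext rfl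
      · exact Fin.ext (by show (l:ℕ)+1-1 = (l:ℕ); omega)


set_option maxHeartbeats 1000000 in
lemma εd_zero : (εT (K := K) m).comp (dT (K := K) m 0) = 0 := by
  apply Finsupp.lhom_ext'
  intro t
  apply LinearMap.ext_ring
  simp only [LinearMap.comp_apply, Finsupp.lsingle_apply, LinearMap.zero_apply,
    LinearMap.zero_comp]
  have h1 : Finsupp.single t (1 : MvPolynomial (Fin n) K) =
      Finsupp.single t (monomial (Lt m t - Lt m t) (1:K)) := by
    rw [tsub_self, monomial_zero', C_1]
  rw [h1, dT_single_norm m 0 t (Lt m t) le_rfl, map_sum]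
  have h2 : ∀ k : Fin 2,
      εT m (((-1:K)^(k:ℕ)) • Finsupp.single (t ∘ k.succAbove)
        (monomial (Lt m t - Lt m (t ∘ k.succAbove)) (1:K))) =
      ((-1:K)^(k:ℕ)) • monomial (Lt m t) (1:K) := by
    intro k
    rw [LinearMap.map_smul_of_tower,
      εT_single_norm m (t ∘ k.succAbove) (Lt m t) (Lt_comp_le m t k.succAbove)]
  rw [Finset.sum_congr rfl fun k _ => h2 k, Fin.sum_univ_two]
  simp

lemma range_d_eq_ker (i : ℕ) :
    LinearMap.range (dT (K := K) m (i+1)) = LinearMap.ker (dT (K := K) m i) := by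
  apply le_antisymm
  · rintro _ ⟨y, rfl⟩
    rw [LinearMap.mem_ker, ← LinearMap.comp_apply, dd_zero m i, LinearMap.zero_apply]
  · intro x hx
    rw [LinearMap.mem_ker] at hx
    have h := DFunLike.congr_fun (homotopy_id m i) x
    simp only [LinearMap.add_apply, LinearMap.comp_apply,
      LinearMap.restrictScalars_apply, LinearMap.id_apply] at h
    rw [hx, map_zero, add_zero] at h
    exact ⟨HT m (i+1) x, h⟩

lemma range_d0_eq_ker_ε :
    LinearMap.range (dT (K := K) m 0) = LinearMap.ker (εT (K := K) m) := by
  apply le_antisymm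
  · rintro _ ⟨y, rfl⟩
    rw [LinearMap.mem_ker, ← LinearMap.comp_apply, εd_zero m, LinearMap.zero_apply]
  · intro x hx
    rw [LinearMap.mem_ker] at hx
    have h := DFunLike.congr_fun (homotopy_id0 m) x
    simp only [LinearMap.add_apply, LinearMap.comp_apply,
      LinearMap.restrictScalars_apply, LinearMap.id_apply] at h
    rw [hx, map_zero, add_zero] at h
    exact ⟨HT m 0 x, h⟩

lemma Lt_fin1 (t : Fin 1 → Fin N) : Lt m t = m (t 0) := by
  have ht : t = fun _ => t 0 := funext fun l => by rw [Subsingleton.elim l 0]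
  rw [ht, Lt_const1]

lemma range_εT :
    LinearMap.range (εT (K := K) m) =
      Ideal.span (Set.range fun g => (monomial (m g) (1:K) : MvPolynomial (Fin n) K)) := by
  apply le_antisymm
  · rintro _ ⟨x, rfl⟩
    rw [εT, Finsupp.lsum_apply]
    apply Submodule.sum_mem
    intro t _
    dsimp only
    rw [LinearMap.mulLeft_apply, Lt_fin1]
    exact Ideal.mul_mem_right _ _ (Ideal.subset_span ⟨t 0, rfl⟩)
  · rw [Ideal.span_le]
    rintro _ ⟨g, rfl⟩
    exact LinearMap.mem_range.2 ⟨Finsupp.single (fun _ : Fin 1 => g) 1,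
      by rw [εT_single, Lt_const1, mul_one]⟩

/-- total degree of an exponent vector -/
def wdeg (u : Fin n →₀ ℕ) : ℕ := ∑ j, u j

lemma wdeg_eq_degree (u : Fin n →₀ ℕ) : Finsupp.degree u = wdeg u := by
  rw [Finsupp.degree, wdeg]
  exact Finset.sum_subset (Finset.subset_univ _)
    (fun x _ hx => Finsupp.notMem_support_iff.1 hx)

lemma wdeg_mono {u v : Fin n →₀ ℕ} (h : v ≤ u) : wdeg v ≤ wdeg u :=
  Finset.sum_le_sum fun j _ => Finsupp.le_def.1 h j

lemma wdeg_tsub {u v : Fin n →₀ ℕ} (h : v ≤ u) :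
    wdeg (u - v) = wdeg u - wdeg v := by
  have key : wdeg (u - v) + wdeg v = wdeg u := by
    rw [wdeg, wdeg, wdeg, ← Finset.sum_add_distrib]
    refine Finset.sum_congr rfl fun j _ => ?_
    rw [Finsupp.tsub_apply]
    have := Finsupp.le_def.1 h j
    omega
  omega

lemma εT_graded (t : Fin 1 → Fin N) :
    εT m (Finsupp.single t (1 : MvPolynomial (Fin n) K)) ∈
      homogeneousSubmodule (Fin n) K (wdeg (Lt m t)) := by
  rw [εT_single, mul_one, mem_homogeneousSubmodule]
  exact isHomogeneous_monomial _ (wdeg_eq_degree _)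

lemma dT_entry (i : ℕ) (t : Fin (i+2) → Fin N) (k' : Fin (i+1) → Fin N) :
    (dT m i (Finsupp.single t (1 : MvPolynomial (Fin n) K))) k' =
      ∑ k : Fin (i+2), if t ∘ k.succAbove = k' then
        monomial (Lt m t - Lt m k') ((-1:K)^(k:ℕ)) else 0 := by
  rw [dT_single, Finsupp.finset_sum_apply]
  refine Finset.sum_congr rfl fun k _ => ?_
  rw [mul_one, Finsupp.single_apply]
  split_ifs with h
  · rw [h]
  · rfl

lemma dT_graded (i : ℕ) (t : Fin (i+2) → Fin N) (k' : Fin (i+1) → Fin N) :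
    (dT m i (Finsupp.single t (1 : MvPolynomial (Fin n) K))) k' ∈
        homogeneousSubmodule (Fin n) K (wdeg (Lt m t) - wdeg (Lt m k')) ∧
      (wdeg (Lt m t) < wdeg (Lt m k') → (dT m i (Finsupp.single t (1 : MvPolynomial (Fin n) K))) k' = 0) := by
  constructor
  · rw [dT_entry]
    apply Submodule.sum_mem
    intro k _
    split_ifs with h
    · rw [mem_homogeneousSubmodule]
      apply isHomogeneous_monomial
      rw [wdeg_eq_degree, wdeg_tsub (h ▸ Lt_comp_le m t k.succAbove)]
    · exact Submodule.zero_mem _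
  · intro hlt
    rw [dT_entry]
    apply Finset.sum_eq_zero
    intro k _
    split_ifs with h
    · exact absurd (wdeg_mono (h ▸ Lt_comp_le m t k.succAbove)) (by omega)
    · rfl


theorem taylor_regle (e : ℕ) (I : Ideal (MvPolynomial (Fin n) K))
    (hI : Ideal.span (Set.range fun g =>
        (monomial (m g) (1:K) : MvPolynomial (Fin n) K)) = I)
    (hb : ∀ (i : ℕ) (t : Fin (i+1) → Fin N), wdeg (Lt m t) ≤ e + i) :
    RegLE I e := by
  refine ⟨fun i => Fin (i+1) → Fin N, fun i => inferInstance,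
    fun i t => wdeg (Lt m t), fun i => dT m i, εT m, ?_, ?_, ?_, ?_, ?_, ?_⟩
  · rw [range_εT m, hI]
  · intro t; exact εT_graded m t
  · intro i t k'; exact dT_graded m i t k'
  · exact range_d0_eq_ker_ε m
  · intro i; exact range_d_eq_ker m i
  · intro i t; exact hb i t

end Taylor

noncomputable section Comb

open Finset

variable {n s : ℕ} (E : Fin s → Finset (Fin n))

/-- first index at which a vertex appears -/
def tv (j : Fin n) : ℕ := s - contVec E j

lemma contVec_le (j : Fin n) : contVec E j ≤ s := by
  rw [contVec]
  exact le_trans (Finset.card_filter_le _ _) (by simp)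

section Hyps

variable (hs : 0 < s) (hmono : Monotone E)
  (hlast : E ⟨s - 1, by omega⟩ = Finset.univ)

include hs hmono hlast in
lemma mem_iff_tv (i : Fin s) (j : Fin n) : j ∈ E i ↔ tv E j ≤ i.val := by
  have hle := contVec_le E j
  constructor
  · intro hj
    have hsub : Finset.Ici i ⊆ Finset.univ.filter (fun i' : Fin s => j ∈ E i') := by
      intro i' hi'
      rw [Finset.mem_Ici] at hi'
      exact Finset.mem_filter.2 ⟨Finset.mem_univ _, hmono hi' hj⟩
    have hcard := Finset.card_le_card hsub
    rw [Fin.card_Ici] at hcard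
    rw [tv, contVec]
    rw [contVec] at hle
    omega
  · intro htv
    by_contra hj
    have hsub : Finset.univ.filter (fun i' : Fin s => j ∈ E i') ⊆ Finset.Ioi i := by
      intro i' hi'
      rw [Finset.mem_filter] at hi'
      rw [Finset.mem_Ioi]
      by_contra hlt
      exact hj (hmono (le_of_not_gt hlt) hi'.2)
    have hcard := Finset.card_le_card hsub
    rw [Fin.card_Ioi] at hcard
    rw [tv] at htv
    have := i.isLt
    rw [contVec] at htv hle
    omega

include hs hlast in
lemma contVec_pos (j : Fin n) : 1 ≤ contVec E j := by
  rw [contVec]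
  exact Finset.card_pos.2
    ⟨⟨s-1, by omega⟩, Finset.mem_filter.2 ⟨Finset.mem_univ _, by rw [hlast]; simp⟩⟩

/-- covers: the intervals `[tv j, tv j + w j)` cover `[0, s)` -/
def IsCover (w : Fin n →₀ ℕ) : Prop :=
  ∀ i : Fin s, ∃ j : Fin n, tv E j ≤ i.val ∧ i.val < tv E j + w j

/-- exact covers -/
def GG : Set (Fin n →₀ ℕ) :=
  {c | (∀ j, c j ≤ contVec E j) ∧
    ∀ i : Fin s, ∃! j : Fin n, tv E j ≤ i.val ∧ i.val < tv E j + c j}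

lemma exact_cover_aux (w : Fin n →₀ ℕ) (hw : IsCover E w) :
    ∀ q, q ≤ s → ∃ c : Fin n →₀ ℕ, c ≤ w ∧
      (∀ j, c j ≠ 0 → tv E j + c j ≤ q) ∧
      (∀ i : Fin s, i.val < q →
        ∃! j : Fin n, tv E j ≤ i.val ∧ i.val < tv E j + c j) := by
  intro q
  induction q using Nat.strong_induction_on with
  | _ q ih =>
  intro hq
  match q, hq with
  | 0, _ =>
    exact ⟨0, zero_le, fun j h => absurd rfl h, fun i hi => absurd hi (by omega)⟩
  | (q'+1), hq =>
    obtain ⟨js, hjs1', hjs2'⟩ := hw ⟨q', by omega⟩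
    have hjs1 : tv E js ≤ q' := hjs1'
    have hjs2 : q' < tv E js + w js := hjs2'
    clear hjs1' hjs2'
    obtain ⟨c', hc'w, hc'bound, hc'uniq⟩ := ih (tv E js) (by omega) (by omega)
    have hc'js : c' js = 0 := by
      by_contra hne
      have := hc'bound js hne
      omega
    refine ⟨c' + Finsupp.single js (q' + 1 - tv E js), ?_, ?_, ?_⟩
    · rw [Finsupp.le_def]
      intro j
      rw [Finsupp.add_apply, Finsupp.single_apply]
      by_cases hj : js = j
      · subst hj
        rw [if_pos rfl, hc'js]
        have := Finsupp.le_def.1 hc'w js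
        omega
      · rw [if_neg hj]
        have := Finsupp.le_def.1 hc'w j
        omega
    · intro j hj
      rw [Finsupp.add_apply, Finsupp.single_apply] at hj ⊢
      by_cases h : js = j
      · subst h
        rw [if_pos rfl] at hj ⊢
        rw [hc'js] at hj ⊢
        omega
      · rw [if_neg h] at hj ⊢
        have := hc'bound j hj
        omega
    · intro i hi
      by_cases hcase : tv E js ≤ i.val
      · refine ⟨js, ⟨hcase, ?_⟩, ?_⟩
        · rw [Finsupp.add_apply, Finsupp.single_apply, if_pos rfl, hc'js]
          omega
        · rintro j ⟨hj1, hj2⟩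
          by_contra hne
          rw [Finsupp.add_apply, Finsupp.single_apply, if_neg (fun h => hne h.symm)] at hj2
          have hj0 : c' j ≠ 0 := by omega
          have := hc'bound j hj0
          omega
      · obtain ⟨j, ⟨hj1, hj2⟩, hjuniq⟩ := hc'uniq i (by omega)
        have hjne : js ≠ j := by
          intro h
          subst h
          rw [hc'js] at hj2
          omega
        refine ⟨j, ⟨hj1, ?_⟩, ?_⟩
        · rw [Finsupp.add_apply, Finsupp.single_apply, if_neg hjne]
          omega
        · rintro j' ⟨hj'1, hj'2⟩
          rw [Finsupp.add_apply, Finsupp.single_apply] at hj'2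
          by_cases h : js = j'
          · subst h
            omega
          · rw [if_neg h] at hj'2
            exact hjuniq j' ⟨hj'1, by omega⟩

include hs hmono hlast in
lemma cover_iff_exists_exact (w : Fin n →₀ ℕ) :
    IsCover E w ↔ ∃ c ∈ GG E, c ≤ w := by
  constructor
  · intro hw
    obtain ⟨c, hcw, hcb, hcu⟩ := exact_cover_aux E w hw s le_rfl
    refine ⟨c, ⟨?_, fun i => hcu i i.isLt⟩, hcw⟩
    intro j
    by_cases h : c j = 0
    · rw [h]; exact zero_le
    · have h1 := hcb j h
      have h2 := contVec_le E j
      rw [tv] at h1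
      omega
  · rintro ⟨c, ⟨hcb, hcu⟩, hcw⟩ i
    obtain ⟨j, ⟨hj1, hj2⟩, _⟩ := hcu i
    exact ⟨j, hj1, by have := Finsupp.le_def.1 hcw j; omega⟩

include hs hmono hlast in
lemma mem_Ci_iff {K : Type*} [Field K] (i : Fin s) (p : MvPolynomial (Fin n) K) :
    p ∈ Ideal.span ((fun j => (MvPolynomial.X j : MvPolynomial (Fin n) K) ^
        (contVec E j + 1 - expVec E i j)) '' (E i : Set (Fin n))) ↔
      ∀ w ∈ p.support, ∃ j : Fin n, tv E j ≤ i.val ∧ i.val < tv E j + w j := by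
  have hexp : ∀ j, expVec E i j = if j ∈ E i then s - i.val else 0 := by
    intro j
    rw [expVec]
    exact congrFun Finsupp.ofSupportFinite_coe j
  have himg : ((fun j => (MvPolynomial.X j : MvPolynomial (Fin n) K) ^
        (contVec E j + 1 - expVec E i j)) '' ↑(E i))
      = (fun u => MvPolynomial.monomial u (1:K)) ''
          ((fun j => Finsupp.single j (contVec E j + 1 - expVec E i j)) '' ↑(E i)) := by
    rw [Set.image_image]
    exact Set.image_congr fun j _ => MvPolynomial.X_pow_eq_monomial
  rw [himg, MvPolynomial.mem_ideal_span_monomial_image]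
  refine forall₂_congr fun w hw => ?_
  constructor
  · rintro ⟨u, ⟨j, hj, rfl⟩, hle⟩
    rw [Finsupp.single_le_iff] at hle
    rw [hexp j, if_pos (Finset.mem_coe.1 hj)] at hle
    have htv := (mem_iff_tv E hs hmono hlast i j).1 hj
    have ha := contVec_le E j
    have hi := i.isLt
    refine ⟨j, htv, ?_⟩
    rw [tv] at htv ⊢
    omega
  · rintro ⟨j, hj1, hj2⟩
    have hj : j ∈ E i := (mem_iff_tv E hs hmono hlast i j).2 hj1
    refine ⟨Finsupp.single j (contVec E j + 1 - expVec E i j), ⟨j, Finset.mem_coe.2 hj, rfl⟩, ?_⟩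
    rw [Finsupp.single_le_iff, hexp j, if_pos hj]
    have ha := contVec_le E j
    have hi := i.isLt
    rw [tv] at hj1 hj2
    omega

include hs hmono hlast in
lemma specialDual_eq_span (K : Type*) [Field K] :
    specialDual K E =
      Ideal.span ((fun u => MvPolynomial.monomial u (1:K)) '' (GG E)) := by
  ext p
  rw [MvPolynomial.mem_ideal_span_monomial_image, specialDual, Submodule.mem_iInf]
  constructor
  · intro hp w hw
    rw [← cover_iff_exists_exact E hs hmono hlast w]
    intro i
    exact (mem_Ci_iff E hs hmono hlast i p).1 (hp i) w hw
  · intro hp i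
    rw [mem_Ci_iff E hs hmono hlast i p]
    intro w hw
    exact ((cover_iff_exists_exact E hs hmono hlast w).2 (hp w hw)) i

lemma sup_apply_nat {N : ℕ} (S : Finset (Fin N)) (f : Fin N → (Fin n →₀ ℕ))
    (j : Fin n) : (S.sup f) j = S.sup fun g => f g j := by
  induction S using Finset.cons_induction with
  | empty => rw [Finset.sup_empty, Finset.sup_empty, Finsupp.bot_eq_zero]; rfl
  | cons a S ha ih => rw [Finset.sup_cons, Finset.sup_cons, Finsupp.sup_apply, ih]

include hs hlast in
lemma sup_bound {N : ℕ} (m : Fin N → (Fin n →₀ ℕ)) (hm : ∀ g, m g ∈ GG E)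
    (hn : 0 < n) (hns : s + 1 ≤ n) (ha0 : contVec E ⟨0, hn⟩ = s)
    (S : Finset (Fin N)) (hS : S.Nonempty) :
    wdeg (S.sup m) ≤ (∑ j ∈ Finset.univ.erase (⟨0, hn⟩ : Fin n), contVec E j)
      + (S.card - 1) := by
  classical
  have hpos : ∀ j, 1 ≤ contVec E j := fun j => contVec_pos E hs hlast j
  set L := S.sup m with hL
  have hLa : ∀ j, L j ≤ contVec E j := by
    intro j
    rw [hL, sup_apply_nat]
    exact Finset.sup_le fun g _ => (hm g).1 j
  set Bad := Finset.univ.filter (fun j : Fin n => L j = contVec E j) with hBad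
  have hBadcard : Bad.card ≤ S.card := by
    set ψ : Fin n → Fin N := fun j =>
      if h : ∃ g ∈ S, m g j = contVec E j then h.choose else hS.choose with hψ
    have hψspec : ∀ j ∈ Bad, ψ j ∈ S ∧ m (ψ j) j = contVec E j := by
      intro j hj
      rw [hBad, Finset.mem_filter] at hj
      have hex : ∃ g ∈ S, m g j = contVec E j := by
        obtain ⟨g, hgS, hgeq⟩ := Finset.exists_mem_eq_sup S hS (fun g => m g j)
        refine ⟨g, hgS, ?_⟩
        rw [← hgeq, ← sup_apply_nat, ← hL, hj.2]
      rw [hψ]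
      simp only [dif_pos hex]
      exact ⟨hex.choose_spec.1, hex.choose_spec.2⟩
    apply Finset.card_le_card_of_injOn ψ (fun j hj => (hψspec j hj).1)
    intro j hj j' hj' heq
    by_contra hne
    have h1 := (hψspec j (by simpa using hj)).2
    have h2 := (hψspec j' (by simpa using hj')).2
    rw [heq] at h1
    set g := ψ j' with hg
    obtain ⟨jj, _, hjj⟩ := (hm g).2 ⟨s - 1, by omega⟩
    have hcj := contVec_le E j
    have hcj' := contVec_le E j'
    have hp1 := hpos j
    have hp2 := hpos j'
    have e1 : j = jj := by
      refine hjj j ⟨?_, ?_⟩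
      · show tv E j ≤ s - 1
        rw [tv]; omega
      · show s - 1 < tv E j + m g j
        rw [tv, h1]; omega
    have e2 : j' = jj := by
      refine hjj j' ⟨?_, ?_⟩
      · show tv E j' ≤ s - 1
        rw [tv]; omega
      · show s - 1 < tv E j' + m g j'
        rw [tv, h2]; omega
    exact hne (e1.trans e2.symm)
  have hsum : ∑ j, L j + ∑ j, (contVec E j - L j) = ∑ j, contVec E j := by
    rw [← Finset.sum_add_distrib]
    exact Finset.sum_congr rfl fun j _ => by have := hLa j; omega
  have hgood : (n : ℕ) - S.card ≤ ∑ j, (contVec E j - L j) := by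
    have hsub : Finset.univ \ Bad ⊆ Finset.univ := Finset.sdiff_subset
    have hcard1 : (Finset.univ \ Bad).card = n - Bad.card := by
      rw [Finset.card_sdiff_of_subset (Finset.subset_univ _), Finset.card_univ, Fintype.card_fin]
    have hstep1 : (Finset.univ \ Bad).card ≤ ∑ j ∈ Finset.univ \ Bad, (contVec E j - L j) := by
      rw [Finset.card_eq_sum_ones]
      apply Finset.sum_le_sum
      intro j hj
      rw [Finset.mem_sdiff, hBad, Finset.mem_filter] at hj
      have h1 := hLa j
      have h2 : ¬ (L j = contVec E j) := fun h => hj.2 ⟨Finset.mem_univ _, h⟩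
      omega
    have hstep2 : ∑ j ∈ Finset.univ \ Bad, (contVec E j - L j) ≤
        ∑ j, (contVec E j - L j) :=
      Finset.sum_le_sum_of_subset hsub
    omega
  have hsplit : ∑ j, contVec E j =
      contVec E ⟨0, hn⟩ + ∑ j ∈ Finset.univ.erase (⟨0, hn⟩ : Fin n), contVec E j :=
    (Finset.add_sum_erase Finset.univ _ (Finset.mem_univ _)).symm
  have hScard : 1 ≤ S.card := Finset.card_pos.2 hS
  have hwdeg : wdeg L = ∑ j, L j := rfl
  omega

include hs hlast in
lemma n_ge {d : ℕ} (hd : 1 ≤ d) (hcard1 : 2 ≤ (E ⟨0, hs⟩).card)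
    (hstep : ∀ i : Fin s, ∀ h : i.val + 1 < s,
      (E ⟨i.val + 1, h⟩).card = (E i).card + d) :
    s + 1 ≤ n := by
  have growth : ∀ q, ∀ h : q < s, 2 + q ≤ (E ⟨q, h⟩).card := by
    intro q
    induction q with
    | zero => intro h; exact hcard1
    | succ q ihq =>
      intro h
      have hq : q < s := by omega
      have hst := hstep ⟨q, hq⟩ h
      rw [hst]
      have := ihq hq
      omega
  have h1 := growth (s - 1) (by omega)
  rw [hlast] at h1
  rw [Finset.card_univ, Fintype.card_fin] at h1
  omega

include hs hmono in
lemma contVec_zero (hn : 0 < n) (hcard1 : 2 ≤ (E ⟨0, hs⟩).card)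
    (hinit : ∀ i : Fin s, ∀ j k : Fin n, j ≤ k → k ∈ E i → j ∈ E i) :
    contVec E ⟨0, hn⟩ = s := by
  have hmem : ∀ i : Fin s, (⟨0, hn⟩ : Fin n) ∈ E i := by
    intro i
    obtain ⟨k, hk⟩ := Finset.card_pos.1 (by omega : 0 < (E ⟨0, hs⟩).card)
    have hk' : k ∈ E i := hmono (by simp [Fin.le_def]) hk
    exact hinit i ⟨0, hn⟩ k (by simp [Fin.le_def]) hk'
  rw [contVec, Finset.filter_true_of_mem (fun i _ => hmem i), Finset.card_univ,
    Fintype.card_fin]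

end Hyps

end Comb

/-- For the special dual `I^{[*]}(H)` of the inclusion ideal of a
uniformly increasing hypergraph on `n` vertices with containment vector
`a_1 ≥ ⋯ ≥ a_n` (vertices ordered so that each edge is an initial segment,
`E_s = X`), one has `reg(I^{[*]}(H)) ≤ a_2 + ⋯ + a_n`. -/
theorem stmt13 {K : Type*} [Field K]
    {n s d : ℕ} (E : Fin s → Finset (Fin n)) (hs : 0 < s) (hd : 1 ≤ d)
    (hmono : Monotone E) (hcard1 : 2 ≤ (E ⟨0, hs⟩).card)
    (hstep : ∀ i : Fin s, ∀ h : i.val + 1 < s, (E ⟨i.val + 1, h⟩).card = (E i).card + d)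
    (hn : 0 < n)
    (hinit : ∀ i : Fin s, ∀ j k : Fin n, j ≤ k → k ∈ E i → j ∈ E i)
    (hlast : E ⟨s - 1, by omega⟩ = Finset.univ) :
    RegLE (specialDual K E)
      (∑ j ∈ Finset.univ.erase (⟨0, hn⟩ : Fin n), contVec E j) := by
  classical
  have hns : s + 1 ≤ n := n_ge E hs hlast hd hcard1 hstep
  have ha0 : contVec E ⟨0, hn⟩ = s := contVec_zero E hs hmono hn hcard1 hinit
  have hGfin : (GG E).Finite := by
    apply Set.Finite.subset
      (Set.finite_Iic (Finsupp.equivFunOnFinite.symm fun j => contVec E j))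
    intro c hc
    rw [Set.mem_Iic, Finsupp.le_def]
    intro j
    simpa using hc.1 j
  have : Fintype (GG E) := hGfin.fintype
  obtain ⟨N, ⟨eqv⟩⟩ : ∃ N, Nonempty (↥(GG E) ≃ Fin N) :=
    ⟨Fintype.card (GG E), ⟨Fintype.equivFin _⟩⟩
  set m : Fin N → (Fin n →₀ ℕ) := fun g => ((eqv.symm g : ↥(GG E)) : Fin n →₀ ℕ)
    with hm
  have hmG : ∀ g, m g ∈ GG E := fun g => (eqv.symm g).2
  apply taylor_regle m
  · have h1 : Set.range m = GG E := by
      ext u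
      constructor
      · rintro ⟨g, rfl⟩
        exact hmG g
      · intro hu
        exact ⟨eqv ⟨u, hu⟩, by rw [hm]; simp⟩
    rw [specialDual_eq_span E hs hmono hlast K]
    rw [show (fun g => MvPolynomial.monomial (m g) (1:K)) =
      (fun u => MvPolynomial.monomial u (1:K)) ∘ m from rfl, Set.range_comp, h1]
  · intro i t
    have himg : Lt m t = (Finset.univ.image t).sup m := by
      rw [Lt, Finset.sup_image]
      rfl
    have hne : (Finset.univ.image t).Nonempty :=
      ⟨t 0, Finset.mem_image.2 ⟨0, Finset.mem_univ _, rfl⟩⟩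
    have hcard : (Finset.univ.image t).card ≤ i + 1 :=
      le_trans Finset.card_image_le (by simp)
    have hb := sup_bound E hs hlast m hmG hn hns ha0 (Finset.univ.image t) hne
    rw [himg]
    omega
end
end

section
/- Let H be a uniformly increasing hypergraph with s edges on n vertices and increment d, with |E_1| = e_1. Then n ≥ e_1 + (s-1)d and the generator x^{b_i} of the inclusion ideal has total degree (s - i + 1)(e_1 + (i-1)d); in particular deg(I(H)), the maximum degree of a minimal generator, equals max over 1 ≤ i ≤ s of (s - i + 1)(e_1 + (i-1)d). -/
open MvPolynomial

noncomputable section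

lemma card_eq {n s d : ℕ} (E : Fin s → Finset (Fin n)) (hs : 0 < s)
    (hstep : ∀ i : Fin s, ∀ h : i.val + 1 < s, (E ⟨i.val + 1, h⟩).card = (E i).card + d) :
    ∀ k (h : k < s), (E ⟨k, h⟩).card = (E ⟨0, hs⟩).card + k * d := by
  intro k
  induction k with
  | zero => intro h; simp
  | succ m ih =>
    intro h
    have hm : m < s := Nat.lt_of_succ_lt h
    have := hstep ⟨m, hm⟩ h
    rw [this, ih hm]
    ring

/-- For a uniformly increasing hypergraph with `s` edges on `n`
vertices, increment `d` and `|E_1| = e_1`: `n ≥ e_1 + (s-1)d`, the generator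
`x^{b_i}` has total degree `(s - i + 1)(e_1 + (i-1)d)` (zero-based:
`(s - i)(e_1 + i·d)`), and `deg I(H)` is the maximum of these values. -/
theorem stmt18
    {n s d : ℕ} (E : Fin s → Finset (Fin n)) (hs : 0 < s) (hd : 1 ≤ d)
    (hmono : Monotone E) (hcard1 : 2 ≤ (E ⟨0, hs⟩).card)
    (hstep : ∀ i : Fin s, ∀ h : i.val + 1 < s, (E ⟨i.val + 1, h⟩).card = (E i).card + d) :
    (E ⟨0, hs⟩).card + (s - 1) * d ≤ n ∧
      (∀ i : Fin s, ((expVec E i).sum fun _ m => m)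
          = (s - i.val) * ((E ⟨0, hs⟩).card + i.val * d)) ∧
      (Finset.univ.sup fun i : Fin s => (expVec E i).sum fun _ m => m)
        = Finset.univ.sup fun i : Fin s =>
            (s - i.val) * ((E ⟨0, hs⟩).card + i.val * d) := by
  have hcard := card_eq E hs hstep
  have h2 : ∀ i : Fin s, ((expVec E i).sum fun _ m => m)
      = (s - i.val) * ((E ⟨0, hs⟩).card + i.val * d) := by
    intro i
    rw [Finsupp.sum_fintype _ _ (fun _ => rfl)]
    have : ∀ j : Fin n, (expVec E i) j = if j ∈ E i then s - i.val else 0 := fun j => rfl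
    simp only [this]
    rw [Finset.sum_ite_mem, Finset.univ_inter, Finset.sum_const, smul_eq_mul]
    have := hcard i.val i.isLt
    rw [show (⟨i.val, i.isLt⟩ : Fin s) = i from rfl] at this
    rw [this, Nat.mul_comm]
  refine ⟨?_, h2, ?_⟩
  · have hlt : s - 1 < s := Nat.sub_lt hs Nat.one_pos
    have hc := hcard (s - 1) hlt
    have hle : (E ⟨s - 1, hlt⟩).card ≤ n := by
      simpa using Finset.card_le_card (Finset.subset_univ (E ⟨s - 1, hlt⟩))
    omega
  · exact Finset.sup_congr rfl fun i _ => h2 i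
end
end
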